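/- Let x_{c,i} ∈ ℝ^m for c = 1, …, C and i = 1, …, k, and set n = kC, class means μ_c = (1/k)∑_i x_{c,i}, and overall mean μ = (1/n)∑_{c,i} x_{c,i}. Define weights W_{(c_1,i),(c_2,j)} = 1/n − 1/k if c_1 = c_2 and W_{(c_1,i),(c_2,j)} = 1/n if c_1 ≠ c_2. Then ∑_{c=1}^C k·(μ_c − μ)(μ_c − μ)ᵀ = (1/2)·∑_{c_1,i} ∑_{c_2,j} W_{(c_1,i),(c_2,j)}·(x_{c_1,i} − x_{c_2,j})(x_{c_1,i} − x_{c_2,j})ᵀ. -/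

import Mathlib

open Matrix


open Finset

lemma scalar_key {C k : ℕ} (hC : 0 < C) (hk : 0 < k) (u v : Fin C → Fin k → ℝ) :
    ∑ c : Fin C, (k : ℝ) *
        ((1 / (k : ℝ)) * ∑ i, u c i - (1 / ((k : ℝ) * (C : ℝ))) * ∑ c', ∑ i, u c' i) *
        ((1 / (k : ℝ)) * ∑ i, v c i - (1 / ((k : ℝ) * (C : ℝ))) * ∑ c', ∑ i, v c' i)
      = (1 / 2 : ℝ) * ∑ c₁, ∑ i, ∑ c₂, ∑ j,
          (if c₁ = c₂ then 1 / ((k : ℝ) * (C : ℝ)) - 1 / (k : ℝ) else 1 / ((k : ℝ) * (C : ℝ)))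
            * ((u c₁ i - u c₂ j) * (v c₁ i - v c₂ j)) := by
  have hk0 : (k : ℝ) ≠ 0 := Nat.cast_ne_zero.mpr hk.ne'
  have hC0 : (C : ℝ) ≠ 0 := Nat.cast_ne_zero.mpr hC.ne'
  set kr := (k : ℝ) with hkr
  set Cr := (C : ℝ) with hCr
  set Su : Fin C → ℝ := fun c => ∑ i, u c i with hSu
  set Sv : Fin C → ℝ := fun c => ∑ i, v c i with hSv
  set Q : Fin C → ℝ := fun c => ∑ i, u c i * v c i with hQ
  -- innermost sum
  have h1 : ∀ (c₁ : Fin C) (i : Fin k) (c₂ : Fin C),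
      ∑ j, ((u c₁ i - u c₂ j) * (v c₁ i - v c₂ j))
        = kr * (u c₁ i * v c₁ i) - u c₁ i * Sv c₂ - v c₁ i * Su c₂ + Q c₂ := by
    intro c₁ i c₂
    have : ∀ j : Fin k, (u c₁ i - u c₂ j) * (v c₁ i - v c₂ j)
        = u c₁ i * v c₁ i - u c₁ i * v c₂ j - v c₁ i * u c₂ j + u c₂ j * v c₂ j := by
      intro j; ring
    rw [Finset.sum_congr rfl (fun j _ => this j)]
    simp [Finset.sum_add_distrib, Finset.sum_sub_distrib, ← Finset.mul_sum,
      Finset.sum_const, Finset.card_univ, hSu, hSv, hQ, nsmul_eq_mul, hkr]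
  -- sum over c₂
  have h2 : ∀ (c₁ : Fin C) (i : Fin k),
      ∑ c₂, ∑ j, (if c₁ = c₂ then 1 / (kr * Cr) - 1 / kr else 1 / (kr * Cr))
            * ((u c₁ i - u c₂ j) * (v c₁ i - v c₂ j))
        = (1 / (kr * Cr)) * (kr * Cr * (u c₁ i * v c₁ i)
              - u c₁ i * (∑ c, Sv c) - v c₁ i * (∑ c, Su c) + ∑ c, Q c)
          - (1 / kr) * (kr * (u c₁ i * v c₁ i) - u c₁ i * Sv c₁ - v c₁ i * Su c₁ + Q c₁) := by
    intro c₁ i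
    have step : ∀ c₂ : Fin C,
        ∑ j, (if c₁ = c₂ then 1 / (kr * Cr) - 1 / kr else 1 / (kr * Cr))
            * ((u c₁ i - u c₂ j) * (v c₁ i - v c₂ j))
          = (1 / (kr * Cr)) * (kr * (u c₁ i * v c₁ i) - u c₁ i * Sv c₂ - v c₁ i * Su c₂ + Q c₂)
            - (if c₁ = c₂ then
                (1 / kr) * (kr * (u c₁ i * v c₁ i) - u c₁ i * Sv c₂ - v c₁ i * Su c₂ + Q c₂)
              else 0) := by
      intro c₂
      rw [← Finset.mul_sum, h1]
      split <;> ring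
    rw [Finset.sum_congr rfl (fun c₂ _ => step c₂), Finset.sum_sub_distrib,
      Finset.sum_ite_eq, ← Finset.mul_sum]
    simp only [Finset.mem_univ, if_true]
    congr 1
    rw [Finset.sum_add_distrib, Finset.sum_sub_distrib, Finset.sum_sub_distrib,
      Finset.sum_const, Finset.card_univ, ← Finset.mul_sum, ← Finset.mul_sum]
    simp only [nsmul_eq_mul, Fintype.card_fin, ← hCr]
    ring
  -- sum over i within class c₁
  have h3 : ∀ c₁ : Fin C,
      ∑ i, ∑ c₂, ∑ j, (if c₁ = c₂ then 1 / (kr * Cr) - 1 / kr else 1 / (kr * Cr))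
            * ((u c₁ i - u c₂ j) * (v c₁ i - v c₂ j))
        = (1 / (kr * Cr)) * (kr * Cr * Q c₁
              - Su c₁ * (∑ c, Sv c) - Sv c₁ * (∑ c, Su c) + kr * ∑ c, Q c)
          - (1 / kr) * (kr * Q c₁ - Su c₁ * Sv c₁ - Sv c₁ * Su c₁ + kr * Q c₁) := by
    intro c₁
    rw [Finset.sum_congr rfl (fun i _ => h2 c₁ i), Finset.sum_sub_distrib,
      ← Finset.mul_sum, ← Finset.mul_sum]
    congr 2
    · rw [Finset.sum_add_distrib, Finset.sum_sub_distrib, Finset.sum_sub_distrib,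
        Finset.sum_const, Finset.card_univ, ← Finset.sum_mul, ← Finset.sum_mul,
        ← Finset.mul_sum]
      simp only [nsmul_eq_mul, Fintype.card_fin, ← hkr, ← hSu, ← hSv, ← hQ]
      try ring
    · rw [Finset.sum_add_distrib, Finset.sum_sub_distrib, Finset.sum_sub_distrib,
        Finset.sum_const, Finset.card_univ, ← Finset.sum_mul, ← Finset.sum_mul,
        ← Finset.mul_sum]
      simp only [nsmul_eq_mul, Fintype.card_fin, ← hkr, ← hSu, ← hSv, ← hQ]
      try ring
  -- total RHS
  have hR : ∑ c₁, ∑ i, ∑ c₂, ∑ j,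
      (if c₁ = c₂ then 1 / (kr * Cr) - 1 / kr else 1 / (kr * Cr))
        * ((u c₁ i - u c₂ j) * (v c₁ i - v c₂ j))
      = 2 * ((1 / kr) * ∑ c, Su c * Sv c
          - (1 / (kr * Cr)) * ((∑ c, Su c) * (∑ c, Sv c))) := by
    rw [Finset.sum_congr rfl (fun c₁ _ => h3 c₁), Finset.sum_sub_distrib]
    have e1 : ∑ c₁ : Fin C, (1 / (kr * Cr)) * (kr * Cr * Q c₁
          - Su c₁ * (∑ c, Sv c) - Sv c₁ * (∑ c, Su c) + kr * ∑ c, Q c)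
        = (1 / (kr * Cr)) * (kr * Cr * (∑ c, Q c)
            - (∑ c, Su c) * (∑ c, Sv c) - (∑ c, Sv c) * (∑ c, Su c)
            + Cr * kr * ∑ c, Q c) := by
      rw [← Finset.mul_sum]
      congr 1
      rw [Finset.sum_add_distrib, Finset.sum_sub_distrib, Finset.sum_sub_distrib,
        ← Finset.mul_sum, ← Finset.sum_mul, ← Finset.sum_mul, Finset.sum_const,
        Finset.card_univ]
      simp [nsmul_eq_mul, hCr]
      ring
    have e2 : ∑ c₁ : Fin C, (1 / kr) * (kr * Q c₁ - Su c₁ * Sv c₁ - Sv c₁ * Su c₁ + kr * Q c₁)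
        = (1 / kr) * (kr * (∑ c, Q c) - (∑ c, Su c * Sv c) - (∑ c, Sv c * Su c)
            + kr * ∑ c, Q c) := by
      rw [← Finset.mul_sum]
      congr 1
      rw [Finset.sum_add_distrib, Finset.sum_sub_distrib, Finset.sum_sub_distrib,
        ← Finset.mul_sum]
    rw [e1, e2]
    have hsvsu : ∑ c, Sv c * Su c = ∑ c, Su c * Sv c := by
      exact Finset.sum_congr rfl (fun c _ => mul_comm _ _)
    rw [hsvsu]
    field_simp
    ring
  rw [hR]
  have hL : ∀ c : Fin C, kr * ((1 / kr) * Su c - (1 / (kr * Cr)) * ∑ c', Su c')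
        * ((1 / kr) * Sv c - (1 / (kr * Cr)) * ∑ c', Sv c')
      = (1 / kr) * (Su c * Sv c) - (1 / (kr * Cr)) * (Su c * ∑ c', Sv c')
        - (1 / (kr * Cr)) * (Sv c * ∑ c', Su c')
        + (1 / (Cr * (kr * Cr))) * ((∑ c', Su c') * ∑ c', Sv c') := by
    intro c
    field_simp
    ring
  rw [Finset.sum_congr rfl (fun c _ => hL c)]
  rw [Finset.sum_add_distrib, Finset.sum_sub_distrib, Finset.sum_sub_distrib,
    ← Finset.mul_sum, ← Finset.mul_sum, ← Finset.mul_sum, Finset.sum_const,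
    Finset.card_univ, ← Finset.sum_mul, ← Finset.sum_mul]
  simp only [nsmul_eq_mul, Fintype.card_fin, ← hCr]
  field_simp
  ring

/-- Pairwise rewriting of the between-class scatter matrix (LFDA, Appendix E): with `C`
classes of `k` samples each, `n = kC`, class means `μ_c` and overall mean `μ`,
`∑_c k·(μ_c − μ)(μ_c − μ)ᵀ` equals the weighted pairwise sum
`(1/2)·∑∑ W·(x − x')(x − x')ᵀ` with weight `1/n − 1/k` for same-class pairs and `1/n`
for different-class pairs. -/
theorem pairwise_between_scatter {m C k : ℕ} (hC : 0 < C) (hk : 0 < k)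
    (x : Fin C → Fin k → (Fin m → ℝ))
    (n : ℕ) (hn : n = k * C)
    (mu : Fin C → (Fin m → ℝ)) (hmu : ∀ c, mu c = (1 / (k : ℝ)) • ∑ i, x c i)
    (mubar : Fin m → ℝ) (hmubar : mubar = (1 / (n : ℝ)) • ∑ c, ∑ i, x c i)
    (W : Fin C → Fin C → ℝ)
    (hW : ∀ c₁ c₂, W c₁ c₂ = if c₁ = c₂ then 1 / (n : ℝ) - 1 / (k : ℝ) else 1 / (n : ℝ)) :
    ∑ c, (k : ℝ) • vecMulVec (mu c - mubar) (mu c - mubar)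
      = (1 / 2 : ℝ) • ∑ c₁, ∑ i, ∑ c₂, ∑ j,
          W c₁ c₂ • vecMulVec (x c₁ i - x c₂ j) (x c₁ i - x c₂ j) := by
  subst hn hmubar
  ext a b
  simp only [hmu, hW, Finset.sum_apply, Matrix.sum_apply, Matrix.smul_apply,
    Matrix.vecMulVec_apply, Pi.sub_apply, Pi.smul_apply, smul_eq_mul,
    Finset.sum_apply, Nat.cast_mul]
  have key := scalar_key hC hk (fun c i => x c i a) (fun c i => x c i b)
  simp only [mul_assoc] at key
  exact key
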